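/- Let T : [1,∞) → ℝ be a nondecreasing, positive, convex, continuous function with T(1) > 1 and liminf_{r→∞} (log T(r))/r = 0. Fix δ ∈ (0,1/2) and define φ(r) = max_{1≤t≤r} (t/log T(t))^δ. Then there exist a set E ⊂ [1,∞) of zero lower density and a function ε with ε(r) → 0 as r → ∞ such that T(r) ≤ T(r+φ(r)) ≤ (1+ε(r))·T(r) for all r ∈ [1,∞)∖E. -/

import Mathlib

open Filter MeasureTheory Topology
open scoped Classical

noncomputable section

namespace TropNev

/-- `f` is tropical meromorphic: continuous and piecewise linear
(affine on a small interval on each side of every point). -/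
def IsTropMero (f : ℝ → ℝ) : Prop :=
  Continuous f ∧ ∀ x : ℝ, ∃ ε > (0:ℝ), ∃ sR sL : ℝ,
    (∀ t ∈ Set.Icc x (x + ε), f t = f x + sR * (t - x)) ∧
    (∀ t ∈ Set.Icc (x - ε) x, f t = f x + sL * (t - x))

/-- ω_f(x): right derivative minus left derivative. -/
def omega (f : ℝ → ℝ) (x : ℝ) : ℝ :=
  derivWithin f (Set.Ici x) x - derivWithin f (Set.Iic x) x

/-- tropical entire: tropical meromorphic with no poles. -/
def IsTropEntire (f : ℝ → ℝ) : Prop :=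
  IsTropMero f ∧ ∀ x : ℝ, 0 ≤ omega f x

/-- tropical proximity function m(r,f). -/
def prox (f : ℝ → ℝ) (r : ℝ) : ℝ := (max (f r) 0 + max (f (-r)) 0) / 2

/-- tropical counting function of poles N(r,f). -/
def countN (f : ℝ → ℝ) (r : ℝ) : ℝ :=
  (1 / 2) * ∑' b : ℝ, if |b| < r ∧ omega f b < 0 then -omega f b * (r - |b|) else 0

/-- N(r, 1₀ ⊘ g): counting function of the roots of g. -/
def countNroots (g : ℝ → ℝ) (r : ℝ) : ℝ := countN (fun x => -g x) r

/-- tropical Nevanlinna characteristic T(r,f). -/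
def charT (f : ℝ → ℝ) (r : ℝ) : ℝ := prox f r + countN f r

/-- limsup_{r→∞} h(r) = 0 (in the real-analysis sense). -/
def LimsupZero (h : ℝ → ℝ) : Prop :=
  (∀ ε : ℝ, 0 < ε → ∀ᶠ r : ℝ in atTop, h r < ε) ∧
  (∀ ε : ℝ, 0 < ε → ∃ᶠ r : ℝ in atTop, -ε < h r)

/-- liminf_{r→∞} h(r) = 0 (in the real-analysis sense). -/
def LiminfZero (h : ℝ → ℝ) : Prop :=
  (∀ ε : ℝ, 0 < ε → ∃ᶠ r : ℝ in atTop, h r < ε) ∧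
  (∀ ε : ℝ, 0 < ε → ∀ᶠ r : ℝ in atTop, -ε < h r)

/-- E ⊆ [1,∞) has zero upper density. -/
def ZeroUpperDensity (E : Set ℝ) : Prop :=
  LimsupZero fun r => (volume (E ∩ Set.Icc 1 r)).toReal / r

/-- E ⊆ [1,∞) has zero lower density. -/
def ZeroLowerDensity (E : Set ℝ) : Prop :=
  LiminfZero fun r => (volume (E ∩ Set.Icc 1 r)).toReal / r

/-- max of finitely many reals. -/
def tmax {m : ℕ} (F : Fin (m + 1) → ℝ) : ℝ :=
  Finset.univ.sup' Finset.univ_nonempty F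

/-- tropical holomorphic curve with reduced representation f₀,…,f_n :
all components tropical entire, with no common roots. -/
def IsTropCurve {n : ℕ} (f : Fin (n + 1) → ℝ → ℝ) : Prop :=
  (∀ k, IsTropEntire (f k)) ∧ ∀ x : ℝ, ∃ k, ¬ 0 < omega (f k) x

/-- tropical Cartan characteristic T_f(r). -/
def curveT {n : ℕ} (f : Fin (n + 1) → ℝ → ℝ) (r : ℝ) : ℝ :=
  (tmax (fun k => f k r) + tmax (fun k => f k (-r))) / 2 - tmax fun k => f k 0

/-- homogeneous tropical polynomial of degree d in the variables x₀,…,x_n,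
with coefficients in ℝ ∪ {−∞} indexed by the degree-d monomials
(i.e. multisets of size d over the variables), not all −∞. -/
structure TropPoly (n d : ℕ) where
  coeff : Sym (Fin (n + 1)) d → EReal
  nontriv : ∃ s, coeff s ≠ ⊥

/-- value of the monomial term c_I + i₀x₀+⋯+i_nx_n. -/
def TropPoly.term {n d : ℕ} (P : TropPoly n d) (s : Sym (Fin (n + 1)) d)
    (x : Fin (n + 1) → ℝ) : EReal :=
  P.coeff s + (((Multiset.map x (s : Multiset (Fin (n + 1)))).sum : ℝ) : EReal)

def TropPoly.evalE {n d : ℕ} (P : TropPoly n d) (x : Fin (n + 1) → ℝ) : EReal :=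
  Finset.univ.sup fun s => P.term s x

/-- the tropical hypersurface V_P : points where the maximum is attained
by at least two monomials. -/
def TropPoly.hyp {n d : ℕ} (P : TropPoly n d) : Set (Fin (n + 1) → ℝ) :=
  {x | ∃ s t : Sym (Fin (n + 1)) d, s ≠ t ∧
        P.term s x = P.evalE x ∧ P.term t x = P.evalE x}

/-- the composition P ∘ f. -/
def TropPoly.compo {n d : ℕ} (P : TropPoly n d) (f : Fin (n + 1) → ℝ → ℝ) : ℝ → ℝ :=
  fun t => (P.evalE fun k => f k t).toReal

/-- ‖a‖ = max_I c_I for the coefficient vector of P. -/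
def TropPoly.coeffNorm {n d : ℕ} (P : TropPoly n d) : ℝ :=
  (Finset.univ.sup fun s => P.coeff s).toReal

/-- tropical Weil function λ_{V_P}(f(x)) = d‖f(x)‖ + d‖a‖ − (P∘f)(x). -/
def weil {n d : ℕ} (P : TropPoly n d) (f : Fin (n + 1) → ℝ → ℝ) (x : ℝ) : ℝ :=
  d * tmax (fun k => f k x) + d * P.coeffNorm - P.compo f x

/-- proximity function m_f(r, V_P). -/
def proxCurve {n d : ℕ} (f : Fin (n + 1) → ℝ → ℝ) (P : TropPoly n d) (r : ℝ) : ℝ :=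
  (weil P f r + weil P f (-r)) / 2

/-- f is tropical algebraically nondegenerate. -/
def AlgNondeg {n : ℕ} (f : Fin (n + 1) → ℝ → ℝ) : Prop :=
  ∀ d : ℕ, 1 ≤ d → ∀ P : TropPoly n d, ∃ t : ℝ, (fun k => f k t) ∉ P.hyp

/-- f is tropical linearly nondegenerate. -/
def LinNondeg {n : ℕ} (f : Fin (n + 1) → ℝ → ℝ) : Prop :=
  ∀ P : TropPoly n 1, ∃ t : ℝ, (fun k => f k t) ∉ P.hyp

/-- Gondran–Minoux linear independence of a finite family of real functions. -/
def GMLinIndep {ι : Type*} [Fintype ι] [DecidableEq ι] (g : ι → ℝ → ℝ) : Prop :=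
  ¬ ∃ (I J : Finset ι) (a : ι → EReal),
      I.Nonempty ∧ J.Nonempty ∧ Disjoint I J ∧ I ∪ J = Finset.univ ∧
      (∃ i, a i ≠ ⊥) ∧
      ∀ x : ℝ, (I.sup fun i => a i + ((g i x : ℝ) : EReal)) =
        (J.sup fun j => a j + ((g j x : ℝ) : EReal))

/-- the degree-d tropical monomials f^I in f₀,…,f_n. -/
def monos {n : ℕ} (f : Fin (n + 1) → ℝ → ℝ) (d : ℕ) :
    Sym (Fin (n + 1)) d → ℝ → ℝ :=
  fun s x => (Multiset.map (fun k => f k x) (s : Multiset (Fin (n + 1)))).sum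

/-- Gondran–Minoux algebraic independence. -/
def GMAlgIndep {n : ℕ} (f : Fin (n + 1) → ℝ → ℝ) : Prop :=
  ∀ d : ℕ, 1 ≤ d → GMLinIndep (monos f d)

/-- F is a complete tropical linear combination of the family h :
every tropical-linear representation of F over h has all coefficients finite. -/
def TropComplete {ι : Type*} [Fintype ι] (h : ι → ℝ → ℝ) (F : ℝ → ℝ) : Prop :=
  ∀ a : ι → EReal,
    (∀ x : ℝ, ((F x : ℝ) : EReal) = Finset.univ.sup fun k => a k + ((h k x : ℝ) : EReal)) →
    ∀ k, a k ≠ ⊥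

/-- the tropical Casoratian with shift c. -/
def casorati {m : ℕ} (c : ℝ) (g : Fin (m + 1) → ℝ → ℝ) : ℝ → ℝ := fun x =>
  Finset.univ.sup' Finset.univ_nonempty
    fun π : Equiv.Perm (Fin (m + 1)) => ∑ j, g j (x + ((π j : ℕ) : ℝ) * c)

/-- tropical Cartan characteristic for a reduced representation [f₀:f₁] in TP¹. -/
def charT2 (f0 f1 : ℝ → ℝ) (r : ℝ) : ℝ :=
  (max (f0 r) (f1 r) + max (f0 (-r)) (f1 (-r))) / 2 - max (f0 0) (f1 0)

/-- reduced representation in TP¹: f₀, f₁ tropical entire with no common roots. -/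
def ReducedPair (f0 f1 : ℝ → ℝ) : Prop :=
  IsTropEntire f0 ∧ IsTropEntire f1 ∧ ∀ x : ℝ, ¬ (0 < omega f0 x ∧ 0 < omega f1 x)

/-- (P∘f)(x) = max(a₀+f₀(x), a₁+f₁(x)) for a TP¹ value [a₁:a₀]. -/
def pcomp (a0 a1 : EReal) (f0 f1 : ℝ → ℝ) : ℝ → ℝ := fun x =>
  ((a0 + ((f0 x : ℝ) : EReal)) ⊔ (a1 + ((f1 x : ℝ) : EReal))).toReal

/-- defect of a tropical holomorphic curve with respect to a tropical hypersurface. -/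
def curveDefect {n d : ℕ} (f : Fin (n + 1) → ℝ → ℝ) (P : TropPoly n d) : ℝ :=
  1 - Filter.limsup (fun r => countNroots (P.compo f) r / (d * curveT f r)) atTop

end TropNev

end

open TropNev Filter MeasureTheory Topology
private lemma log_one_add_ge_half (u : ℝ) (h0 : 0 ≤ u) (h1 : u ≤ 1) :
    u / 2 ≤ Real.log (1 + u) := by
  have h1u : (0:ℝ) < 1 + u := by linarith
  have h := Real.log_le_sub_one_of_pos (show (0:ℝ) < (1+u)⁻¹ by positivity)
  rw [Real.log_inv] at h
  have hinv : (1+u) * (1+u)⁻¹ = 1 := mul_inv_cancel₀ (ne_of_gt h1u)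
  nlinarith [h]

set_option maxHeartbeats 2000000 in
/-- lemma on convex growth functions (liminf version, with φ). -/
theorem stmt0 (T : ℝ → ℝ)
    (hmono : MonotoneOn T (Set.Ici 1))
    (hpos : ∀ r : ℝ, 1 ≤ r → 0 < T r)
    (hconv : ConvexOn ℝ (Set.Ici 1) T)
    (hcont : ContinuousOn T (Set.Ici 1))
    (hT1 : 1 < T 1)
    (hliminf : LiminfZero fun r => Real.log (T r) / r)
    (δ : ℝ) (hδ0 : 0 < δ) (hδ1 : δ < 1 / 2)
    (φ : ℝ → ℝ)
    (hφ : ∀ r : ℝ, 1 ≤ r →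
      φ r = sSup ((fun t => (t / Real.log (T t)) ^ δ) '' Set.Icc 1 r)) :
    ∃ (E : Set ℝ) (ε : ℝ → ℝ), E ⊆ Set.Ici 1 ∧ ZeroLowerDensity E ∧
      Filter.Tendsto ε Filter.atTop (nhds 0) ∧
      ∀ r : ℝ, 1 ≤ r → r ∉ E →
        T r ≤ T (r + φ r) ∧ T (r + φ r) ≤ (1 + ε r) * T r := by
  have hδ2 : δ < 1 := by linarith
  have h1δ : (0:ℝ) < 1 - δ := by linarith
  set L : ℝ → ℝ := fun t => Real.log (T t) with hLdef
  have hT1pos : (0:ℝ) < T 1 := hpos 1 le_rfl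
  have hL1 : 0 < L 1 := Real.log_pos hT1
  have hTge : ∀ t : ℝ, 1 ≤ t → 1 < T t := fun t ht =>
    lt_of_lt_of_le hT1 (hmono (Set.mem_Ici.2 le_rfl) (Set.mem_Ici.2 ht) ht)
  have hLpos : ∀ t : ℝ, 1 ≤ t → 0 < L t := fun t ht => Real.log_pos (hTge t ht)
  have hLmono : MonotoneOn L (Set.Ici 1) := fun a ha b hb hab =>
    Real.log_le_log (hpos a ha) (hmono ha hb hab)
  have hLcont : ContinuousOn L (Set.Ici 1) := by
    apply ContinuousOn.log hcont
    intro t ht; exact ne_of_gt (hpos t ht)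
  have hhpos : ∀ t : ℝ, 1 ≤ t → 0 < t / L t := fun t ht =>
    div_pos (lt_of_lt_of_le one_pos ht) (hLpos t ht)
  have hhcont : ContinuousOn (fun t => t / L t) (Set.Ici 1) :=
    continuousOn_id.div hLcont fun t ht => ne_of_gt (hLpos t ht)
  set f : ℝ → ℝ := fun t => (t / L t) ^ δ with hfdef
  have hfpos : ∀ t : ℝ, 1 ≤ t → 0 < f t := fun t ht => Real.rpow_pos_of_pos (hhpos t ht) δ
  have hfcont : ContinuousOn f (Set.Ici 1) := by
    apply ContinuousOn.rpow_const hhcont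
    intro t ht; exact Or.inl (ne_of_gt (hhpos t ht))
  have hφeq : ∀ r : ℝ, 1 ≤ r → φ r = sSup (f '' Set.Icc 1 r) := by
    intro r hr; exact hφ r hr
  have hIccsub : ∀ r : ℝ, Set.Icc (1:ℝ) r ⊆ Set.Ici 1 := fun r x hx => hx.1
  have hφmax : ∀ r : ℝ, 1 ≤ r → ∃ t ∈ Set.Icc 1 r, φ r = f t ∧ ∀ u ∈ Set.Icc 1 r, f u ≤ f t := by
    intro r hr
    obtain ⟨t, ht, hmax⟩ := isCompact_Icc.exists_isMaxOn (Set.nonempty_Icc.2 hr)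
      (hfcont.mono (hIccsub r))
    refine ⟨t, ht, ?_, fun u hu => hmax hu⟩
    rw [hφeq r hr]
    exact IsGreatest.csSup_eq ⟨Set.mem_image_of_mem f ht, by
      rintro y ⟨u, hu, rfl⟩; exact hmax hu⟩
  have hφpos : ∀ r : ℝ, 1 ≤ r → 0 < φ r := by
    intro r hr; obtain ⟨t, ht, he, -⟩ := hφmax r hr; rw [he]; exact hfpos t ht.1
  have hφub : ∀ r : ℝ, 1 ≤ r → φ r ≤ (r / L 1) ^ δ := by
    intro r hr; obtain ⟨t, ht, he, -⟩ := hφmax r hr; rw [he]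
    apply Real.rpow_le_rpow (hhpos t ht.1).le _ hδ0.le
    exact div_le_div₀ (le_trans zero_le_one hr) ht.2 hL1
      (hLmono (Set.mem_Ici.2 le_rfl) (Set.mem_Ici.2 ht.1) ht.1)
  have hφmono : ∀ a b : ℝ, 1 ≤ a → a ≤ b → φ a ≤ φ b := by
    intro a b ha hab
    rw [hφeq a ha, hφeq b (ha.trans hab)]
    apply csSup_le_csSup
    · exact (isCompact_Icc.image_of_continuousOn (hfcont.mono (hIccsub b))).bddAbove
    · exact ((Set.nonempty_Icc.2 ha).image f)
    · exact Set.image_mono (Set.Icc_subset_Icc_right hab)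
  -- Claim A
  have hA : ∀ e : ℝ, 0 < e → ∀ M : ℝ, ∃ R, M ≤ R ∧ 1 ≤ R ∧ φ R * L R / R < e := by
    intro e he M
    obtain ⟨s, hs0, hs1, hse, hsM⟩ :
        ∃ s : ℝ, 0 < s ∧ s < 1 ∧ s ^ (1 - δ) < e ∧ s < L 1 / (|M| + 1) := by
      have hcont0 : ContinuousAt (fun x : ℝ => x ^ (1 - δ)) 0 :=
        Real.continuousAt_rpow_const 0 (1 - δ) (Or.inr h1δ.le)
      have h0 : (0:ℝ) ^ (1 - δ) = 0 := Real.zero_rpow (ne_of_gt h1δ)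
      have hev : ∀ᶠ s : ℝ in nhds 0, s ^ (1 - δ) < e := by
        have ht := hcont0.tendsto; rw [h0] at ht
        exact ht.eventually_lt_const he
      have hev2 : ∀ᶠ s : ℝ in nhds 0, s < 1 := eventually_lt_nhds one_pos
      have hev3 : ∀ᶠ s : ℝ in nhds 0, s < L 1 / (|M| + 1) :=
        eventually_lt_nhds (by positivity)
      have hall : ∀ᶠ s : ℝ in nhdsWithin 0 (Set.Ioi 0),
          s < 1 ∧ s ^ (1 - δ) < e ∧ s < L 1 / (|M| + 1) :=
        eventually_nhdsWithin_of_eventually_nhds ((hev2.and (hev.and hev3)))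
      obtain ⟨s, hs, hs0⟩ := (hall.and self_mem_nhdsWithin).exists
      exact ⟨s, hs0, hs.1, hs.2.1, hs.2.2⟩
    obtain ⟨r₀, hr₀s, hr₀1⟩ : ∃ r₀ : ℝ, L r₀ / r₀ < s ∧ 1 ≤ r₀ :=
      ((hliminf.1 s hs0).and_eventually (eventually_ge_atTop (1:ℝ))).exists
    obtain ⟨R, hR, hmax⟩ := isCompact_Icc.exists_isMaxOn (Set.nonempty_Icc.2 hr₀1)
      (hhcont.mono (hIccsub r₀))
    have hR1 : (1:ℝ) ≤ R := hR.1
    have hLR : 0 < L R := hLpos R hR1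
    have hr₀pos : (0:ℝ) < r₀ := lt_of_lt_of_le one_pos hr₀1
    have hLr₀ : L r₀ < s * r₀ := by
      have := (div_lt_iff₀ hr₀pos).1 hr₀s; linarith
    have hhR : 1 / s < R / L R := by
      calc 1 / s < r₀ / L r₀ := by
            rw [div_lt_div_iff₀ hs0 (hLpos r₀ hr₀1)]; nlinarith
        _ ≤ R / L R := hmax ⟨hr₀1, le_rfl⟩
    have hRM : M ≤ R := by
      have h1 : (1 / s) * L 1 ≤ (R / L R) * L R := by
        apply mul_le_mul hhR.le (hLmono (Set.mem_Ici.2 le_rfl) (Set.mem_Ici.2 hR1) hR1)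
          hL1.le (by positivity)
      rw [div_mul_cancel₀ R (ne_of_gt hLR)] at h1
      have h2 : |M| + 1 < (1 / s) * L 1 := by
        rw [div_mul_eq_mul_div, one_mul, lt_div_iff₀ hs0]
        have := (lt_div_iff₀ (by positivity : (0:ℝ) < |M| + 1)).1 hsM
        nlinarith
      have : M ≤ |M| + 1 := by
        have := le_abs_self M; linarith
      linarith
    have hφR : φ R = f R := by
      rw [hφeq R hR1]
      apply IsGreatest.csSup_eq
      constructor
      · exact Set.mem_image_of_mem f ⟨hR1, le_rfl⟩
      · rintro y ⟨u, hu, rfl⟩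
        exact Real.rpow_le_rpow (hhpos u hu.1).le
          (hmax ⟨hu.1, hu.2.trans hR.2⟩) hδ0.le
    refine ⟨R, hRM, hR1, ?_⟩
    have hRLR : (R / L R) * L R = R := div_mul_cancel₀ R (ne_of_gt hLR)
    have hval : φ R * L R / R = (R / L R) ^ (δ - 1) := by
      rw [hφR]
      show (R / L R) ^ δ * L R / R = (R / L R) ^ (δ - 1)
      rw [Real.rpow_sub (hhpos R hR1), Real.rpow_one]
      rw [← hRLR]
      field_simp
    rw [hval]
    have hs1R : (0:ℝ) < 1 / s := by positivity
    have hb1 : (1 / s) ^ (1 - δ) ≤ (R / L R) ^ (1 - δ) :=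
      Real.rpow_le_rpow hs1R.le hhR.le h1δ.le
    have hb2 : (R / L R) ^ (δ - 1) ≤ ((1 / s) ^ (1 - δ))⁻¹ := by
      rw [show δ - 1 = -(1 - δ) by ring, Real.rpow_neg (hhpos R hR1).le]
      exact inv_anti₀ (Real.rpow_pos_of_pos hs1R _) hb1
    have hb3 : ((1 / s) ^ (1 - δ))⁻¹ = s ^ (1 - δ) := by
      rw [Real.div_rpow zero_le_one hs0.le, Real.one_rpow]
      rw [one_div, inv_inv]
    calc (R / L R) ^ (δ - 1) ≤ s ^ (1 - δ) := by rw [← hb3]; exact hb2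
      _ < e := hse
  -- the sequence r n
  choose F hF1 hF2 hF3 using fun (n : ℕ) => hA (1 / ((n:ℝ) + 1) ^ 2) (by positivity)
  set r : ℕ → ℝ := fun n => Nat.rec (F 0 1) (fun n prev => F (n + 1) (prev + 1)) n with hrdef
  have hrs : ∀ n : ℕ, r (n + 1) = F (n + 1) (r n + 1) := fun n => rfl
  have hr1 : ∀ n : ℕ, 1 ≤ r n := by
    intro n; cases n with
    | zero => exact hF2 0 1
    | succ m => rw [hrs m]; exact hF2 _ _
  have hrsucc : ∀ n : ℕ, r n + 1 ≤ r (n + 1) := by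
    intro n; rw [hrs n]; exact hF1 _ _
  have hrbound : ∀ n : ℕ, φ (r n) * L (r n) / r n < 1 / ((n:ℝ) + 1) ^ 2 := by
    intro n; cases n with
    | zero => exact hF3 0 1
    | succ m => rw [hrs m]; exact hF3 _ _
  have hrstrict : StrictMono r := strictMono_nat_of_lt_succ fun n => by linarith [hrsucc n]
  have hrge : ∀ n : ℕ, (n:ℝ) + 1 ≤ r n := by
    intro n; induction n with
    | zero => simpa using hr1 0
    | succ m ih => push_cast; have := hrsucc m; linarith
  -- N and ε
  set N : ℝ → ℕ := fun x => sSup {m | r m ≤ x} with hNdef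
  set ε : ℝ → ℝ := fun x => 1 / ((N x : ℝ) + 1) with hεdef
  have hεpos : ∀ x, 0 < ε x := fun x => by positivity
  have hbdd : ∀ x : ℝ, BddAbove {m : ℕ | r m ≤ x} := by
    intro x
    refine ⟨Nat.ceil x, fun m hm => ?_⟩
    have h1 : (m:ℝ) ≤ x := by have := hrge m; have := hm; simp only [Set.mem_setOf_eq] at this ⊢; linarith [hrge m]
    calc m = Nat.ceil ((m:ℝ)) := (Nat.ceil_natCast m).symm
      _ ≤ Nat.ceil x := Nat.ceil_mono h1
  have hNge : ∀ (n : ℕ) (x : ℝ), r n ≤ x → n ≤ N x := fun n x h => le_csSup (hbdd x) h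
  have hNle : ∀ (n : ℕ) (x : ℝ), x < r (n + 1) → N x ≤ n := by
    intro n x hx
    rcases Set.eq_empty_or_nonempty {m : ℕ | r m ≤ x} with h | h
    · show sSup {m : ℕ | r m ≤ x} ≤ n
      rw [h]; simp
    · apply csSup_le h
      intro m hm
      have h2 : r m < r (n + 1) := lt_of_le_of_lt hm hx
      have hmn : m < n + 1 := hrstrict.lt_iff_lt.mp h2
      omega
  set E : Set ℝ := {x | 1 ≤ x ∧ (1 + ε x) * T x < T (x + φ x)} with hEdef
  have hE1 : E ⊆ Set.Ici 1 := fun x hx => hx.1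
  refine ⟨E, ε, hE1, ?_, ?_, ?_⟩
  · -- ZeroLowerDensity
    constructor
    · -- frequently small
      intro e he
      rw [frequently_atTop]
      intro M
      have hsmall : ∀ κ : ℝ, 0 < κ → ∀ᶠ x : ℝ in atTop, (x / L 1) ^ δ ≤ κ * x := by
        intro κ hκ
        have h1 : Tendsto (fun x : ℝ => x ^ (δ - 1)) atTop (nhds 0) := by
          have := tendsto_rpow_neg_atTop h1δ
          simpa [neg_sub] using this
        have h2 : ∀ᶠ x : ℝ in atTop, x ^ (δ - 1) < κ * (L 1) ^ δ :=
          h1.eventually_lt_const (by positivity)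
        filter_upwards [h2, eventually_ge_atTop (1:ℝ)] with x hx2 hx1
        have hx0 : (0:ℝ) < x := lt_of_lt_of_le one_pos hx1
        have hδx : x ^ δ = x ^ (δ - 1) * x := by
          nth_rewrite 1 [show δ = (δ - 1) + 1 by ring]
          rw [Real.rpow_add hx0, Real.rpow_one]
        have hdr : (x / L 1) ^ δ = x ^ δ / (L 1) ^ δ := Real.div_rpow hx0.le hL1.le δ
        rw [hdr, hδx, div_le_iff₀ (Real.rpow_pos_of_pos hL1 δ)]
        nlinarith [Real.rpow_pos_of_pos hL1 δ]
      obtain ⟨x₀, hx₀⟩ := eventually_atTop.1 ((hsmall (e/4) (by positivity)).and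
        ((hsmall (1/8) (by norm_num)).and (eventually_ge_atTop (2:ℝ))))
      obtain ⟨n, hn⟩ := exists_nat_ge (max (max M (4/e)) x₀)
      set R := r n with hRdef
      have hR1 : 1 ≤ R := hr1 n
      have hnR : (n:ℝ) + 1 ≤ R := hrge n
      have hRM : M ≤ R := by
        have := le_max_left M (4/e)
        have := le_max_left (max M (4/e)) x₀
        linarith
      have hRx₀ : x₀ ≤ R := by
        have := le_max_right (max M (4/e)) x₀
        linarith
      have hne : 4/e ≤ (n:ℝ) + 1 := by
        have := le_max_right M (4/e)
        have := le_max_left (max M (4/e)) x₀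
        linarith
      obtain ⟨hc1, hc2, hR2⟩ := hx₀ R hRx₀
      set c := φ R with hcdef
      have hc0 : 0 < c := hφpos R hR1
      have hcub := hφub R hR1
      have hce : c ≤ e/4 * R := le_trans hcub hc1
      have hc8 : c ≤ 1/8 * R := le_trans hcub hc2
      have h2cR : 2*c + 1 ≤ R := by nlinarith
      have h1Rc : 1 ≤ R - c := by linarith
      have h1cRc : 1 + c ≤ R - c := by linarith
      set η := Real.log (1 + 1/((n:ℝ)+1)) with hηdef
      have hn1 : (0:ℝ) < (n:ℝ) + 1 := by positivity
      have hu0 : (0:ℝ) < 1/((n:ℝ)+1) := by positivity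
      have hu1 : 1/((n:ℝ)+1) ≤ 1 := by
        rw [div_le_one hn1]
        have : (0:ℝ) ≤ (n:ℝ) := Nat.cast_nonneg n
        linarith
      have hη : 0 < η := Real.log_pos (by linarith)
      have hηb : 1/((n:ℝ)+1)/2 ≤ η := log_one_add_ge_half _ hu0.le hu1
      set g : ℝ → ℝ := fun x => L (x + c) - L x with hgdef
      set B := Set.Icc (1:ℝ) (R - c) ∩ g ⁻¹' Set.Ici η with hBdef
      have hgcont : ContinuousOn g (Set.Icc 1 (R - c)) := by
        apply ContinuousOn.sub
        · apply hLcont.comp (Continuous.continuousOn (continuous_id.add continuous_const))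
          intro x hx
          exact Set.mem_Ici.2 (by linarith [hx.1, hc0.le] : (1:ℝ) ≤ x + c)
        · exact hLcont.mono (hIccsub _)
      have hBclosed : IsClosed B := hgcont.preimage_isClosed_of_isClosed isClosed_Icc isClosed_Ici
      have hBmeas : MeasurableSet B := hBclosed.measurableSet
      have hBsub : B ⊆ Set.Icc 1 (R - c) := Set.inter_subset_left
      have hEB : E ∩ Set.Icc 1 (R - c) ⊆ B := by
        rintro x ⟨hxE, hx1, hxRc⟩
        refine ⟨⟨hx1, hxRc⟩, ?_⟩
        obtain ⟨-, hxlt⟩ := hxE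
        have hxR : x ≤ R := by linarith
        have hRlt : R < r (n + 1) := hrstrict (Nat.lt_succ_self n)
        have hNx : N x ≤ n := hNle n x (by linarith)
        have hεx : 1/((n:ℝ)+1) ≤ ε x := by
          apply one_div_le_one_div_of_le (by positivity)
          have : (N x : ℝ) ≤ (n:ℝ) := by exact_mod_cast hNx
          linarith
        have hφxc : φ x ≤ c := hφmono x R hx1 hxR
        have hTxpos : 0 < T x := hpos x hx1
        have step : (1 + 1/((n:ℝ)+1)) * T x < T (x + c) := by
          calc (1 + 1/((n:ℝ)+1)) * T x ≤ (1 + ε x) * T x := by nlinarith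
            _ < T (x + φ x) := hxlt
            _ ≤ T (x + c) := hmono (Set.mem_Ici.2 (by linarith [(hφpos x hx1).le]))
                (Set.mem_Ici.2 (by linarith [hc0.le])) (by linarith)
        have hlog : η + L x = Real.log ((1 + 1/((n:ℝ)+1)) * T x) := by
          rw [Real.log_mul (by positivity) (ne_of_gt hTxpos)]
        have hlt : Real.log ((1 + 1/((n:ℝ)+1)) * T x) < L (x + c) :=
          Real.log_lt_log (by positivity) step
        have hfin : η + L x < L (x + c) := hlog ▸ hlt
        show x ∈ g ⁻¹' Set.Ici η
        have hgx : g x = L (x + c) - L x := rfl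
        simp only [Set.mem_preimage, Set.mem_Ici, hgx]
        linarith
      have hintL : ∀ a b : ℝ, 1 ≤ a → 1 ≤ b → IntervalIntegrable L volume a b := by
        intro a b ha hb
        apply MonotoneOn.intervalIntegrable
        apply hLmono.mono
        intro x hx
        exact Set.mem_Ici.2 (le_trans (le_min ha hb) hx.1)
      have hgint : IntegrableOn g (Set.Icc 1 (R - c)) volume := hgcont.integrableOn_Icc
      have hBfin : volume B < ⊤ := lt_of_le_of_lt (measure_mono hBsub) measure_Icc_lt_top
      have step1 : η * (volume B).toReal ≤ ∫ x in B, g x := by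
        have hconst : IntegrableOn (fun _ => η) B volume :=
          integrableOn_const hBfin.ne
        have := setIntegral_mono_on hconst (hgint.mono_set hBsub) hBmeas
          (fun x hx => hx.2)
        simpa [setIntegral_const, smul_eq_mul, mul_comm, Measure.real] using this
      have step2 : ∫ x in B, g x ≤ ∫ x in Set.Icc 1 (R - c), g x := by
        apply setIntegral_mono_set hgint
        · filter_upwards [ae_restrict_mem measurableSet_Icc] with x hx
          have hLx : L x ≤ L (x + c) := hLmono (Set.mem_Ici.2 hx.1)
            (Set.mem_Ici.2 (by linarith [hx.1, hc0.le])) (by linarith [hc0.le])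
          have hgx : g x = L (x + c) - L x := rfl
          show (0:ℝ) ≤ g x
          rw [hgx]; linarith
        · exact HasSubset.Subset.eventuallyLE hBsub
      have step3 : ∫ x in Set.Icc 1 (R - c), g x ≤ c * L R := by
        rw [MeasureTheory.integral_Icc_eq_integral_Ioc, ← intervalIntegral.integral_of_le h1Rc]
        have iL2 : IntervalIntegrable L volume 1 (R - c) := hintL _ _ le_rfl h1Rc
        have iL1 : IntervalIntegrable (fun x => L (x + c)) volume 1 (R - c) := by
          have := (hintL (1 + c) R (by linarith) (by linarith)).comp_add_right c
          simpa using this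
        have hgsub : (∫ x in (1:ℝ)..(R - c), g x)
            = (∫ x in (1:ℝ)..(R - c), L (x + c)) - ∫ x in (1:ℝ)..(R - c), L x :=
          intervalIntegral.integral_sub iL1 iL2
        rw [hgsub, intervalIntegral.integral_comp_add_right L c,
          show (1:ℝ) + c = 1 + c from rfl, show R - c + c = R by ring]
        have split1 : (∫ x in (1:ℝ)..(1 + c), L x) + ∫ x in (1 + c)..R, L x
            = ∫ x in (1:ℝ)..R, L x :=
          intervalIntegral.integral_add_adjacent_intervals
            (hintL _ _ le_rfl (by linarith)) (hintL _ _ (by linarith) (by linarith))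
        have split2 : (∫ x in (1:ℝ)..(R - c), L x) + ∫ x in (R - c)..R, L x
            = ∫ x in (1:ℝ)..R, L x :=
          intervalIntegral.integral_add_adjacent_intervals
            (hintL _ _ le_rfl h1Rc) (hintL _ _ h1Rc (by linarith))
        have bound1 : ∫ x in (R - c)..R, L x ≤ c * L R := by
          have h := intervalIntegral.integral_mono_on (by linarith : R - c ≤ R)
            (hintL _ _ h1Rc (by linarith)) intervalIntegrable_const
            (fun x hx => hLmono (Set.mem_Ici.2 (le_trans h1Rc hx.1))
              (Set.mem_Ici.2 (by linarith)) hx.2)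
          rw [intervalIntegral.integral_const, smul_eq_mul] at h
          calc ∫ x in (R - c)..R, L x ≤ (R - (R - c)) * L R := h
            _ = c * L R := by ring
        have bound2 : 0 ≤ ∫ x in (1:ℝ)..(1 + c), L x :=
          intervalIntegral.integral_nonneg (by linarith) (fun x hx => (hLpos x hx.1).le)
        linarith
      have hvolB : (volume B).toReal ≤ c * L R / η := by
        rw [le_div_iff₀ hη]
        calc (volume B).toReal * η = η * (volume B).toReal := by ring
          _ ≤ ∫ x in B, g x := step1
          _ ≤ ∫ x in Set.Icc 1 (R - c), g x := step2
          _ ≤ c * L R := step3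
      have hsubE : E ∩ Set.Icc 1 R ⊆ B ∪ Set.Icc (R - c) R := by
        rintro x ⟨hxE, hx1, hxR⟩
        by_cases h : x ≤ R - c
        · exact Or.inl (hEB ⟨hxE, hx1, h⟩)
        · exact Or.inr ⟨(not_le.1 h).le, hxR⟩
      have hmeasure : (volume (E ∩ Set.Icc 1 R)).toReal ≤ (volume B).toReal + c := by
        have h1 : volume (E ∩ Set.Icc 1 R) ≤ volume B + ENNReal.ofReal c := by
          have := le_trans (measure_mono hsubE) (measure_union_le (μ := volume) B (Set.Icc (R - c) R))
          rwa [Real.volume_Icc, show R - (R - c) = c by ring] at this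
        have h3 := ENNReal.toReal_mono
          (ENNReal.add_ne_top.2 ⟨ne_of_lt hBfin, ENNReal.ofReal_ne_top⟩) h1
        rwa [ENNReal.toReal_add (ne_of_lt hBfin) ENNReal.ofReal_ne_top,
          ENNReal.toReal_ofReal hc0.le] at h3
      refine ⟨R, hRM, ?_⟩
      have hRpos : (0:ℝ) < R := by linarith
      have hq : c * L R / R < 1/((n:ℝ)+1)^2 := hrbound n
      have hηinv : 1/η ≤ 2*((n:ℝ)+1) := by
        rw [div_le_iff₀ hη]
        have hm1 := mul_le_mul_of_nonneg_left hηb (by positivity : (0:ℝ) ≤ 2*((n:ℝ)+1))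
        have hm2 : 2*((n:ℝ)+1) * (1/((n:ℝ)+1)/2) = 1 := by field_simp
        linarith
      have ha0 : 0 ≤ c * L R / R := by
        have := (hLpos R hR1).le
        positivity
      have hbound1 : (c * L R / R) / η ≤ (c * L R / R) * (2*((n:ℝ)+1)) := by
        rw [div_eq_mul_inv]
        apply mul_le_mul_of_nonneg_left _ ha0
        rw [← one_div]; exact hηinv
      have hbound2 : (c * L R / R) * (2*((n:ℝ)+1)) < (1/((n:ℝ)+1)^2) * (2*((n:ℝ)+1)) :=
        mul_lt_mul_of_pos_right hq (by positivity)
      have hbound3 : (1/((n:ℝ)+1)^2) * (2*((n:ℝ)+1)) = 2/((n:ℝ)+1) := by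
        field_simp
      have hbound4 : 2/((n:ℝ)+1) ≤ e/2 := by
        rw [div_le_iff₀ hn1]
        rw [div_le_iff₀ he] at hne
        nlinarith
      have hcRe : c / R ≤ e/4 := by
        rw [div_le_iff₀ hRpos]; linarith
      calc (volume (E ∩ Set.Icc 1 R)).toReal / R ≤ (c * L R / η + c) / R := by
            apply (div_le_div_iff_of_pos_right hRpos).2
            linarith
        _ = (c * L R / R) / η + c / R := by
            rw [add_div, div_right_comm]
        _ < e := by
            have := hbound1.trans_lt (hbound2.trans_eq hbound3)
            linarith
    · intro e he
      filter_upwards [eventually_ge_atTop (1:ℝ)] with R hR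
      have h0 : 0 ≤ (volume (E ∩ Set.Icc 1 R)).toReal / R := by positivity
      linarith
  · -- tendsto ε 0
    rw [Metric.tendsto_nhds]
    intro e he
    obtain ⟨m, hm⟩ := exists_nat_gt (1 / e)
    filter_upwards [eventually_ge_atTop (r m)] with x hxm
    have hNm : m ≤ N x := hNge m x hxm
    rw [Real.dist_eq, sub_zero, abs_of_pos (hεpos x)]
    have h1 : ε x ≤ 1 / ((m:ℝ) + 1) := by
      apply one_div_le_one_div_of_le (by positivity)
      have : (m:ℝ) ≤ (N x : ℝ) := by exact_mod_cast hNm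
      linarith
    have h2 : 1 / ((m:ℝ) + 1) < e := by
      rw [div_lt_iff₀ (by positivity)]
      rw [div_lt_iff₀ he] at hm
      nlinarith
    linarith
  · -- the inequalities outside E
    intro x hx hxE
    have hφx := (hφpos x hx).le
    constructor
    · exact hmono (Set.mem_Ici.2 hx) (Set.mem_Ici.2 (by linarith)) (by linarith)
    · by_contra hlt
      push_neg at hlt
      exact hxE ⟨hx, hlt⟩
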